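/- arXiv:2105.07617 — 2 statements merged into one kernel-verified Lean document; each statement's English description precedes it below -/
import Mathlib

section
/- For all integers r ≥ 0 and t ≥ 0, E(r,t) = (1-p)·∑_{j=0}^{t-1} β_p(j,r), and moreover E(r,t) = (1-p)·( min{r,t} + ∑_{j=r}^{t-1} β_p(j,r) ), where empty sums are 0. -/
/-- `betaP p t r = ∑_{i=0}^{r-1} C(t,i) (1-p)^i p^(t-i)`. -/
noncomputable def betaP (p : ℝ) (t r : ℕ) : ℝ :=
  ∑ i ∈ Finset.range r, (t.choose i : ℝ) * (1 - p) ^ i * p ^ (t - i)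

/-- Expected rank function `E(r,t) = ∑_{i=0}^{t} C(t,i) (1-p)^i p^(t-i) * min{i,r}`. -/
noncomputable def expRank (p : ℝ) (r t : ℕ) : ℝ :=
  ∑ i ∈ Finset.range (t + 1),
    (t.choose i : ℝ) * (1 - p) ^ i * p ^ (t - i) * ((min i r : ℕ) : ℝ)

lemma betaP_alt (p : ℝ) (t r : ℕ) :
    betaP p t r = ∑ i ∈ Finset.range (t + 1),
      (if i < r then (t.choose i : ℝ) * (1 - p) ^ i * p ^ (t - i) else 0) := by
  have h1 : betaP p t r = ∑ i ∈ Finset.range (max (t+1) r),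
      (if i < r then (t.choose i : ℝ) * (1 - p) ^ i * p ^ (t - i) else 0) := by
    unfold betaP
    have : (∑ i ∈ Finset.range r, (t.choose i : ℝ) * (1 - p) ^ i * p ^ (t - i))
        = ∑ i ∈ Finset.range r,
          (if i < r then (t.choose i : ℝ) * (1 - p) ^ i * p ^ (t - i) else 0) :=
      Finset.sum_congr rfl (fun i hi => (if_pos (Finset.mem_range.mp hi)).symm)
    rw [this]
    exact Finset.sum_subset (Finset.range_subset_range.mpr (le_max_right _ _))
      (fun i _ hi => by rw [if_neg (by simpa using hi)])
  rw [h1]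
  symm
  refine Finset.sum_subset (Finset.range_subset_range.mpr (le_max_left _ _)) ?_
  intro i hi hni
  have : t < i := by
    simp only [Finset.mem_range, not_lt] at hni
    omega
  rw [Nat.choose_eq_zero_of_lt this]
  simp

lemma step (p : ℝ) (r t : ℕ) :
    expRank p r (t + 1) = expRank p r t + (1 - p) * betaP p t r := by
  have hmin : ∀ i : ℕ, ((min (i+1) r : ℕ) : ℝ)
      = ((min i r : ℕ) : ℝ) + (if i < r then (1:ℝ) else 0) := by
    intro i
    split_ifs with h
    · have : min (i+1) r = min i r + 1 := by omega
      rw [this]; push_cast; ring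
    · have : min (i+1) r = min i r := by omega
      rw [this]; ring
  unfold expRank
  rw [Finset.sum_range_succ']
  have h0 : ((t+1).choose 0 : ℝ) * (1 - p) ^ 0 * p ^ (t + 1 - 0) * ((min 0 r : ℕ) : ℝ) = 0 := by
    simp
  rw [h0, add_zero]
  have hsplit : ∀ i ∈ Finset.range (t+1),
      ((t+1).choose (i+1) : ℝ) * (1 - p) ^ (i+1) * p ^ (t + 1 - (i+1)) * ((min (i+1) r : ℕ) : ℝ)
      = (1 - p) * ((t.choose i : ℝ) * (1 - p) ^ i * p ^ (t - i) * ((min i r : ℕ) : ℝ))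
        + (1 - p) * (if i < r then (t.choose i : ℝ) * (1 - p) ^ i * p ^ (t - i) else 0)
        + ((t.choose (i+1) : ℝ) * (1 - p) ^ (i+1) * p ^ (t + 1 - (i+1)) * ((min (i+1) r : ℕ) : ℝ)) := by
    intro i hi
    rw [Nat.choose_succ_succ, Nat.cast_add, hmin i]
    have he : t + 1 - (i + 1) = t - i := by omega
    rw [he]
    split_ifs with h
    · push_cast; ring
    · push_cast; ring
  rw [Finset.sum_congr rfl hsplit]
  rw [Finset.sum_add_distrib, Finset.sum_add_distrib]
  rw [← Finset.mul_sum, ← Finset.mul_sum]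
  -- third sum equals p * expRank p r t
  have h3 : (∑ i ∈ Finset.range (t+1),
      (t.choose (i+1) : ℝ) * (1 - p) ^ (i+1) * p ^ (t + 1 - (i+1)) * ((min (i+1) r : ℕ) : ℝ))
      = p * expRank p r t := by
    have : (∑ i ∈ Finset.range (t+1),
        (t.choose (i+1) : ℝ) * (1 - p) ^ (i+1) * p ^ (t + 1 - (i+1)) * ((min (i+1) r : ℕ) : ℝ))
        = ∑ j ∈ Finset.range (t+2),
          (t.choose j : ℝ) * (1 - p) ^ j * p ^ (t + 1 - j) * ((min j r : ℕ) : ℝ) := by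
      symm
      rw [Finset.sum_range_succ']
      simp only [Nat.zero_min, Nat.cast_zero, mul_zero, add_zero]
    rw [this, Finset.sum_range_succ, Nat.choose_succ_self]
    simp only [Nat.cast_zero, zero_mul, mul_zero, zero_mul, add_zero]
    unfold expRank
    rw [Finset.mul_sum]
    refine Finset.sum_congr rfl (fun j hj => ?_)
    have hj' : j ≤ t := by simpa [Nat.lt_succ_iff] using Finset.mem_range.mp hj
    have : t + 1 - j = (t - j) + 1 := by omega
    rw [this, pow_succ]
    ring
  rw [h3, betaP_alt]
  unfold expRank
  ring

lemma betaP_one (p : ℝ) (j r : ℕ) (h : j < r) : betaP p j r = 1 := by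
  unfold betaP
  have h1 : (∑ i ∈ Finset.range (j+1), (j.choose i : ℝ) * (1 - p) ^ i * p ^ (j - i))
      = ∑ i ∈ Finset.range r, (j.choose i : ℝ) * (1 - p) ^ i * p ^ (j - i) := by
    refine Finset.sum_subset (Finset.range_subset_range.mpr (by omega)) ?_
    intro i _ hni
    have : j < i := by simp only [Finset.mem_range, not_lt] at hni; omega
    rw [Nat.choose_eq_zero_of_lt this]
    simp
  rw [← h1]
  have h2 : ((1 - p) + p) ^ j
      = ∑ i ∈ Finset.range (j+1), (1-p) ^ i * p ^ (j - i) * (j.choose i : ℝ) :=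
    add_pow (1-p) p j
  have h3 : ((1 - p) + p : ℝ) = 1 := by ring
  rw [h3, one_pow] at h2
  exact (Finset.sum_congr rfl (fun i _ => by ring)).trans h2.symm

lemma part1 (p : ℝ) (r t : ℕ) :
    expRank p r t = (1 - p) * ∑ j ∈ Finset.range t, betaP p j r := by
  induction t with
  | zero => simp [expRank]
  | succ t ih =>
    rw [step, ih, Finset.sum_range_succ]
    ring

theorem stmt8 (p : ℝ) (hp0 : 0 < p) (hp1 : p < 1) (r t : ℕ) :
    expRank p r t = (1 - p) * ∑ j ∈ Finset.range t, betaP p j r ∧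
    expRank p r t =
      (1 - p) * (((min r t : ℕ) : ℝ) + ∑ j ∈ Finset.Ico r t, betaP p j r) := by
  refine ⟨part1 p r t, ?_⟩
  rw [part1 p r t]
  congr 1
  have hIco : Finset.Ico (min r t) t = Finset.Ico r t := by
    rcases le_total r t with h | h
    · rw [min_eq_left h]
    · rw [min_eq_right h, Finset.Ico_self, Finset.Ico_eq_empty (by omega)]
  have hsplit : (∑ j ∈ Finset.range (min r t), betaP p j r)
      + ∑ j ∈ Finset.Ico (min r t) t, betaP p j r
      = ∑ j ∈ Finset.range t, betaP p j r := by
    rw [Finset.range_eq_Ico, Finset.range_eq_Ico]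
    exact Finset.sum_Ico_consecutive (fun j => betaP p j r) (Nat.zero_le _) (min_le_right r t)
  rw [← hsplit, hIco]
  congr 1
  have : ∀ j ∈ Finset.range (min r t), betaP p j r = 1 := fun j hj =>
    betaP_one p j r (lt_of_lt_of_le (Finset.mem_range.mp hj) (min_le_left r t))
  rw [Finset.sum_congr rfl this, Finset.sum_const, nsmul_eq_mul]
  simp
end

section
/- Let {t_b}_{b∈L} be an assignment with ∑_{b∈L} t_b = t_max (a feasible solution of problem (B)). Then {t_b}_{b∈L} is NOT a solution of (B) if and only if there exist two distinct indices κ, ρ ∈ L with t_ρ ≥ 1 such that (1-p)·β_p(t_κ, r_κ) > (1-p)·β_p(t_ρ − 1, r_ρ). -/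
open Finset

lemma sum_range_eq_sum_range_ite (g : ℕ → ℝ) (n r : ℕ) (hg : ∀ j, n ≤ j → g j = 0) :
    ∑ j ∈ range r, g j = ∑ j ∈ range n, if j < r then g j else 0 := by
  have h1 : ∑ j ∈ range r, g j = ∑ j ∈ range (max n r), if j < r then g j else 0 := by
    rw [← Finset.sum_subset (Finset.range_subset_range.2 (le_max_right n r))
      (fun j _ hj => ?_)]
    · exact Finset.sum_congr rfl fun j hj => by
        rw [if_pos (Finset.mem_range.1 hj)]
    · rw [if_neg (fun h => hj (Finset.mem_range.2 h))]
  have h2 : ∑ j ∈ range n, (if j < r then g j else 0)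
      = ∑ j ∈ range (max n r), if j < r then g j else 0 := by
    apply Finset.sum_subset (Finset.range_subset_range.2 (le_max_left n r))
    intro j _ hj
    have hn : n ≤ j := le_of_not_gt fun h => hj (Finset.mem_range.2 h)
    split_ifs
    · exact hg j hn
    · rfl
  rw [h1, ← h2]

lemma betaP_zero (p : ℝ) (t : ℕ) : betaP p t 0 = 0 := by simp [betaP]

lemma betaP_nonneg {p : ℝ} (hp0 : 0 < p) (hp1 : p < 1) (t r : ℕ) : 0 ≤ betaP p t r := by
  have h : (0:ℝ) ≤ 1 - p := by linarith
  apply Finset.sum_nonneg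
  intro i _
  positivity

lemma betaP_succ_succ (p : ℝ) (s k : ℕ) :
    betaP p (s+1) (k+1) = p * betaP p s (k+1) + (1 - p) * betaP p s k := by
  unfold betaP
  rw [Finset.sum_range_succ']
  have hA : ∀ i ∈ range k,
      ((s+1).choose (i+1) : ℝ) * (1 - p) ^ (i+1) * p ^ (s+1-(i+1))
      = (s.choose i : ℝ) * (1 - p) ^ (i+1) * p ^ (s-i)
        + (s.choose (i+1) : ℝ) * (1 - p) ^ (i+1) * p ^ (s-i) := by
    intro i _
    rw [Nat.succ_sub_succ, Nat.choose_succ_succ]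
    push_cast
    ring
  rw [Finset.sum_congr rfl hA, Finset.sum_add_distrib]
  have hB : ∑ i ∈ range k, (s.choose (i+1) : ℝ) * (1 - p) ^ (i+1) * p ^ (s-i)
      + ((s+1).choose 0 : ℝ) * (1 - p) ^ 0 * p ^ (s+1-0)
      = p * ∑ i ∈ range (k+1), (s.choose i : ℝ) * (1 - p) ^ i * p ^ (s-i) := by
    rw [Finset.mul_sum, Finset.sum_range_succ']
    congr 1
    · apply Finset.sum_congr rfl
      intro i _
      by_cases hi : i + 1 ≤ s
      · have : s - i = (s - (i+1)) + 1 := by omega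
        rw [this]
        ring
      · rw [Nat.choose_eq_zero_of_lt (by omega)]
        push_cast
        ring
    · simp [pow_succ]
      ring
  have hC : ∑ i ∈ range k, (s.choose i : ℝ) * (1 - p) ^ (i+1) * p ^ (s-i)
      = (1 - p) * ∑ i ∈ range k, (s.choose i : ℝ) * (1 - p) ^ i * p ^ (s-i) := by
    rw [Finset.mul_sum]
    apply Finset.sum_congr rfl
    intro i _
    ring
  rw [add_assoc, hB, hC]
  ring

lemma betaP_mono_r (p : ℝ) (hp0 : 0 < p) (hp1 : p < 1) (s k : ℕ) :
    betaP p s k ≤ betaP p s (k+1) := by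
  have h : (0:ℝ) ≤ 1 - p := by linarith
  unfold betaP
  apply Finset.sum_le_sum_of_subset_of_nonneg (Finset.range_subset_range.2 (by omega))
  intro i _ _
  positivity

lemma betaP_succ_le (p : ℝ) (hp0 : 0 < p) (hp1 : p < 1) (s r : ℕ) :
    betaP p (s+1) r ≤ betaP p s r := by
  cases r with
  | zero => simp [betaP_zero]
  | succ k =>
    rw [betaP_succ_succ]
    have h1 : betaP p s k ≤ betaP p s (k+1) := betaP_mono_r p hp0 hp1 s k
    nlinarith [betaP_nonneg hp0 hp1 s (k+1), betaP_nonneg hp0 hp1 s k]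

lemma betaP_anti (p : ℝ) (hp0 : 0 < p) (hp1 : p < 1) (r : ℕ) {a b : ℕ} (hab : a ≤ b) :
    betaP p b r ≤ betaP p a r := by
  induction b, hab using Nat.le_induction with
  | base => exact le_rfl
  | succ n hn ih => exact le_trans (betaP_succ_le p hp0 hp1 n r) ih

lemma expRank_zero (p : ℝ) (r : ℕ) : expRank p r 0 = 0 := by simp [expRank]

lemma expRank_succ (p : ℝ) (hp0 : 0 < p) (hp1 : p < 1) (r s : ℕ) :
    expRank p r (s+1) = expRank p r s + (1 - p) * betaP p s r := by
  unfold expRank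
  rw [Finset.sum_range_succ']
  have h0 : ((s+1).choose 0 : ℝ) * (1 - p) ^ 0 * p ^ (s+1-0) * ((min 0 r : ℕ) : ℝ) = 0 := by
    simp
  rw [h0, add_zero]
  have hA : ∀ i ∈ range (s+1),
      ((s+1).choose (i+1) : ℝ) * (1 - p) ^ (i+1) * p ^ (s+1-(i+1)) * ((min (i+1) r : ℕ) : ℝ)
      = (s.choose i : ℝ) * (1 - p) ^ (i+1) * p ^ (s-i) * ((min (i+1) r : ℕ) : ℝ)
        + (s.choose (i+1) : ℝ) * (1 - p) ^ (i+1) * p ^ (s-i) * ((min (i+1) r : ℕ) : ℝ) := by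
    intro i _
    rw [Nat.succ_sub_succ, Nat.choose_succ_succ]
    push_cast
    ring
  rw [Finset.sum_congr rfl hA, Finset.sum_add_distrib]
  -- second sum equals p * expRank p r s
  have hB : ∑ i ∈ range (s+1),
      (s.choose (i+1) : ℝ) * (1 - p) ^ (i+1) * p ^ (s-i) * ((min (i+1) r : ℕ) : ℝ)
      = p * ∑ i ∈ range (s+1), (s.choose i : ℝ) * (1 - p) ^ i * p ^ (s-i) * ((min i r : ℕ) : ℝ) := by
    have hR : p * ∑ i ∈ range (s+1), (s.choose i : ℝ) * (1 - p) ^ i * p ^ (s-i) * ((min i r : ℕ) : ℝ)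
        = ∑ i ∈ range s,
            p * ((s.choose (i+1) : ℝ) * (1 - p) ^ (i+1) * p ^ (s-(i+1)) * ((min (i+1) r : ℕ) : ℝ)) := by
      rw [Finset.sum_range_succ']
      have h00 : (s.choose 0 : ℝ) * (1 - p) ^ 0 * p ^ (s-0) * ((min 0 r : ℕ) : ℝ) = 0 := by simp
      rw [h00, add_zero, Finset.mul_sum]
    rw [hR, Finset.sum_range_succ, Nat.choose_succ_self]
    push_cast
    rw [zero_mul, zero_mul, zero_mul, add_zero]
    apply Finset.sum_congr rfl
    intro i hi
    have hi' : i < s := Finset.mem_range.1 hi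
    have hss : s - i = (s - (i+1)) + 1 := by omega
    rw [hss, pow_succ]
    ring
  -- first sum equals (1-p) * expRank + (1-p) * betaP
  have hmin : ∀ i : ℕ, ((min (i+1) r : ℕ) : ℝ)
      = ((min i r : ℕ) : ℝ) + (if i < r then (1:ℝ) else 0) := by
    intro i
    by_cases h : i < r
    · rw [if_pos h]
      have : min (i+1) r = min i r + 1 := by omega
      rw [this]; push_cast; ring
    · rw [if_neg h]
      have : min (i+1) r = min i r := by omega
      rw [this]; ring
  have hC : ∑ i ∈ range (s+1),
      (s.choose i : ℝ) * (1 - p) ^ (i+1) * p ^ (s-i) * ((min (i+1) r : ℕ) : ℝ)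
      = (1-p) * (∑ i ∈ range (s+1), (s.choose i : ℝ) * (1 - p) ^ i * p ^ (s-i) * ((min i r : ℕ) : ℝ))
        + (1-p) * betaP p s r := by
    have step : ∀ i ∈ range (s+1),
        (s.choose i : ℝ) * (1 - p) ^ (i+1) * p ^ (s-i) * ((min (i+1) r : ℕ) : ℝ)
        = (1-p) * ((s.choose i : ℝ) * (1 - p) ^ i * p ^ (s-i) * ((min i r : ℕ) : ℝ))
          + (1-p) * (if i < r then (s.choose i : ℝ) * (1 - p) ^ i * p ^ (s-i) else 0) := by
      intro i _
      rw [hmin i]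
      by_cases h : i < r
      · rw [if_pos h, if_pos h]; ring
      · rw [if_neg h, if_neg h]; ring
    rw [Finset.sum_congr rfl step, Finset.sum_add_distrib, ← Finset.mul_sum, ← Finset.mul_sum]
    congr 2
    rw [betaP, sum_range_eq_sum_range_ite (fun j => (s.choose j : ℝ) * (1 - p) ^ j * p ^ (s-j)) (s+1) r]
    intro j hj
    rw [Nat.choose_eq_zero_of_lt (by omega)]
    push_cast
    ring
  rw [hB, hC]
  ring

lemma expRank_eq_sum (p : ℝ) (hp0 : 0 < p) (hp1 : p < 1) (r tt : ℕ) :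
    expRank p r tt = ∑ s ∈ range tt, (1 - p) * betaP p s r := by
  induction tt with
  | zero => simp [expRank_zero]
  | succ n ih => rw [expRank_succ p hp0 hp1, Finset.sum_range_succ, ih]

theorem stmt12 {ι : Type*} (p : ℝ) (hp0 : 0 < p) (hp1 : p < 1)
    (L : Finset ι) (r : ι → ℕ) (tmax : ℕ)
    (t : ι → ℕ) (hfeas : (∑ b ∈ L, t b) = tmax) :
    (¬ ∀ t' : ι → ℕ, (∑ b ∈ L, t' b) = tmax →
      ∑ b ∈ L, expRank p (r b) (t' b) ≤ ∑ b ∈ L, expRank p (r b) (t b)) ↔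
    ∃ κ ∈ L, ∃ ρ ∈ L, κ ≠ ρ ∧ 1 ≤ t ρ ∧
      (1 - p) * betaP p (t ρ - 1) (r ρ) < (1 - p) * betaP p (t κ) (r κ) := by
  classical
  have hq : (0:ℝ) < 1 - p := by linarith
  constructor
  · -- not optimal → exists violating pair
    intro hne
    by_contra hcon
    push_neg at hcon
    -- hcon : ∀ κ ∈ L, ∀ ρ ∈ L, κ ≠ ρ → 1 ≤ t ρ →
    --   (1-p)*betaP p (t κ) (r κ) ≤ (1-p)*betaP p (t ρ - 1) (r ρ)
    apply hne
    intro t' hsum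
    set m : ι → ℕ → ℝ := fun b s => (1 - p) * betaP p s (r b) with hmdef
    set G : Finset (Σ _ : ι, ℕ) := L.sigma (fun b => Finset.Ico (t b) (t' b)) with hG
    set D : Finset (Σ _ : ι, ℕ) := L.sigma (fun b => Finset.Ico (t' b) (t b)) with hD
    have hdiff : ∀ b ∈ L, expRank p (r b) (t' b) - expRank p (r b) (t b)
        = (∑ s ∈ Finset.Ico (t b) (t' b), m b s) - ∑ s ∈ Finset.Ico (t' b) (t b), m b s := by
      intro b _
      rw [expRank_eq_sum p hp0 hp1, expRank_eq_sum p hp0 hp1]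
      rcases le_total (t b) (t' b) with h | h
      · rw [Finset.sum_Ico_eq_sub _ h, Finset.Ico_eq_empty (by omega), Finset.sum_empty]
        ring
      · rw [Finset.sum_Ico_eq_sub (fun s => m b s) h,
          Finset.Ico_eq_empty (a := t b) (b := t' b) (by omega), Finset.sum_empty]
        ring
    have hGD : (∑ b ∈ L, expRank p (r b) (t' b)) - (∑ b ∈ L, expRank p (r b) (t b))
        = (∑ g ∈ G, m g.1 g.2) - ∑ d ∈ D, m d.1 d.2 := by
      rw [← Finset.sum_sub_distrib, Finset.sum_congr rfl hdiff, Finset.sum_sub_distrib,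
        hG, hD, Finset.sum_sigma, Finset.sum_sigma]
    have hcardG : G.card = ∑ b ∈ L, (t' b - t b) := by
      rw [hG, Finset.card_sigma]
      exact Finset.sum_congr rfl fun b _ => Nat.card_Ico _ _
    have hcardD : D.card = ∑ b ∈ L, (t b - t' b) := by
      rw [hD, Finset.card_sigma]
      exact Finset.sum_congr rfl fun b _ => Nat.card_Ico _ _
    have hcard : G.card = D.card := by
      have h1 : ∑ b ∈ L, (t' b + (t b - t' b)) = ∑ b ∈ L, (t b + (t' b - t b)) :=
        Finset.sum_congr rfl fun b _ => by omega
      rw [Finset.sum_add_distrib, Finset.sum_add_distrib, hsum, hfeas] at h1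
      omega
    have cross : ∀ g ∈ G, ∀ d ∈ D, m g.1 g.2 ≤ m d.1 d.2 := by
      intro g hg d hd
      rw [hG, Finset.mem_sigma, Finset.mem_Ico] at hg
      rw [hD, Finset.mem_sigma, Finset.mem_Ico] at hd
      obtain ⟨hgL, hg1, hg2⟩ := hg
      obtain ⟨hdL, hd1, hd2⟩ := hd
      have hneq : g.1 ≠ d.1 := by
        intro h
        rw [h] at hg1 hg2
        omega
      have h1 : m g.1 g.2 ≤ m g.1 (t g.1) :=
        mul_le_mul_of_nonneg_left (betaP_anti p hp0 hp1 _ hg1) hq.le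
      have h2 : m g.1 (t g.1) ≤ m d.1 (t d.1 - 1) :=
        hcon g.1 hgL d.1 hdL hneq (by omega)
      have h3 : m d.1 (t d.1 - 1) ≤ m d.1 d.2 :=
        mul_le_mul_of_nonneg_left (betaP_anti p hp0 hp1 _ (by omega : d.2 ≤ t d.1 - 1)) hq.le
      linarith
    have hmain : (∑ g ∈ G, m g.1 g.2) ≤ ∑ d ∈ D, m d.1 d.2 := by
      rcases Nat.eq_zero_or_pos G.card with h0 | hpos
      · have hGe : G = ∅ := Finset.card_eq_zero.1 h0
        have hDe : D = ∅ := Finset.card_eq_zero.1 (hcard ▸ h0)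
        rw [hGe, hDe]
      · have key : (D.card : ℝ) * (∑ g ∈ G, m g.1 g.2) ≤ (G.card : ℝ) * ∑ d ∈ D, m d.1 d.2 := by
          have e1 : (D.card : ℝ) * (∑ g ∈ G, m g.1 g.2) = ∑ _d ∈ D, ∑ g ∈ G, m g.1 g.2 := by
            rw [Finset.sum_const, nsmul_eq_mul]
          have e2 : ∑ d ∈ D, ∑ g ∈ G, m g.1 g.2 ≤ ∑ d ∈ D, ∑ _g ∈ G, m d.1 d.2 :=
            Finset.sum_le_sum fun d hd => Finset.sum_le_sum fun g hg => cross g hg d hd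
          have e3 : ∑ d ∈ D, ∑ _g ∈ G, m d.1 d.2 = (G.card : ℝ) * ∑ d ∈ D, m d.1 d.2 := by
            rw [Finset.mul_sum]
            exact Finset.sum_congr rfl fun d _ => by rw [Finset.sum_const, nsmul_eq_mul]
          linarith
        rw [hcard] at key
        have hDpos : (0:ℝ) < (D.card : ℝ) := by
          have : 0 < D.card := hcard ▸ hpos
          exact_mod_cast this
        exact le_of_mul_le_mul_left key hDpos
    linarith [hGD, hmain]
  · rintro ⟨κ, hκ, ρ, hρ, hneq, htρ, hlt⟩ hopt
    set t' : ι → ℕ := fun b => if b = κ then t κ + 1 else if b = ρ then t ρ - 1 else t b with ht'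
    have hsum' : (∑ b ∈ L, t' b) = tmax := by
      have h1 : ∀ b ∈ L, t' b + (if b = ρ then 1 else 0) = t b + (if b = κ then 1 else 0) := by
        intro b _
        by_cases hbκ : b = κ
        · subst hbκ
          simp [ht', hneq]
        · by_cases hbρ : b = ρ
          · subst hbρ
            simp [ht', hbκ]
            omega
          · simp [ht', hbκ, hbρ]
      have h2 := Finset.sum_congr rfl h1
      rw [Finset.sum_add_distrib, Finset.sum_add_distrib, hfeas,
        Finset.sum_ite_eq' L ρ (fun _ => 1), Finset.sum_ite_eq' L κ (fun _ => 1),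
        if_pos hρ, if_pos hκ] at h2
      omega
    have hval : ∑ b ∈ L, expRank p (r b) (t' b)
        = (∑ b ∈ L, expRank p (r b) (t b))
          + ((1 - p) * betaP p (t κ) (r κ) - (1 - p) * betaP p (t ρ - 1) (r ρ)) := by
      have h1 : ∀ b ∈ L, expRank p (r b) (t' b)
          = expRank p (r b) (t b)
            + ((if b = κ then (1-p) * betaP p (t κ) (r κ) else 0)
              - (if b = ρ then (1-p) * betaP p (t ρ - 1) (r ρ) else 0)) := by
        intro b _
        by_cases hbκ : b = κ
        · subst hbκ
          simp [ht', hneq]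
          rw [expRank_succ p hp0 hp1] <;> ring
        · by_cases hbρ : b = ρ
          · subst hbρ
            simp [ht', hbκ]
            have hb : t b - 1 + 1 = t b := by omega
            have hE := expRank_succ p hp0 hp1 (r b) (t b - 1)
            rw [hb] at hE
            linarith
          · simp [ht', hbκ, hbρ]
      rw [Finset.sum_congr rfl h1, Finset.sum_add_distrib, Finset.sum_sub_distrib,
        Finset.sum_ite_eq' L κ, Finset.sum_ite_eq' L ρ, if_pos hκ, if_pos hρ]
    have := hopt t' hsum'
    rw [hval] at this
    linarith
end
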